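/- Let m ≤ n and let nonnegative reals J_{m−1}, (I_i)_{m≤i≤n}, (ω_i)_{m≤i≤n} be given. Compute (Ĩ_k, J_k, ω̃_k) for m ≤ k ≤ n by the recursion Ĩ_k = ω_k + (I_k − J_{k−1})^+, J_k = ω_k + (J_{k−1} − I_k)^+, ω̃_k = I_k ∧ J_{k−1}. Define T = max_{m≤j≤n} ( Σ_{i=m}^j I_i + Σ_{i=j}^n ω_i ) and T̃ = max_{m≤j≤n} ( Σ_{i=m}^j ω̃_i + Σ_{i=j}^n Ĩ_i ). Then T = T̃. -/

import Mathlib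

lemma Icc_insert_top (m N : ℤ) (h : m ≤ N + 1) :
    Finset.Icc m (N + 1) = insert (N + 1) (Finset.Icc m N) := by
  ext j; simp only [Finset.mem_Icc, Finset.mem_insert]; omega

theorem queue_T_duality (m n : ℤ) (hmn : m ≤ n) (I ω Itil J ωtil : ℤ → ℝ)
    (hInn : ∀ i, 0 ≤ I i) (hωnn : ∀ i, 0 ≤ ω i) (hJinit : 0 ≤ J (m - 1))
    (hItil : ∀ k, m ≤ k → k ≤ n → Itil k = ω k + max (I k - J (k - 1)) 0)
    (hJ : ∀ k, m ≤ k → k ≤ n → J k = ω k + max (J (k - 1) - I k) 0)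
    (hωtil : ∀ k, m ≤ k → k ≤ n → ωtil k = min (I k) (J (k - 1))) :
    Finset.sup' (Finset.Icc m n) (Finset.nonempty_Icc.mpr hmn)
      (fun j => (∑ i ∈ Finset.Icc m j, I i) + ∑ i ∈ Finset.Icc j n, ω i)
    = Finset.sup' (Finset.Icc m n) (Finset.nonempty_Icc.mpr hmn)
      (fun j => (∑ i ∈ Finset.Icc m j, ωtil i) + ∑ i ∈ Finset.Icc j n, Itil i) := by
  -- strengthened induction
  suffices key : ∀ N, m ≤ N → N ≤ n →
      ∀ (hne : (Finset.Icc m N).Nonempty),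
      (Finset.sup' (Finset.Icc m N) hne
          (fun j => (∑ i ∈ Finset.Icc m j, I i) + ∑ i ∈ Finset.Icc j N, ω i)
        = Finset.sup' (Finset.Icc m N) hne
          (fun j => (∑ i ∈ Finset.Icc m j, ωtil i) + ∑ i ∈ Finset.Icc j N, Itil i))
      ∧ (max (Finset.sup' (Finset.Icc m N) hne
            (fun j => (∑ i ∈ Finset.Icc m j, I i) + ∑ i ∈ Finset.Icc j N, ω i))
          (J (m-1) + ∑ i ∈ Finset.Icc m N, ω i)
        = (∑ i ∈ Finset.Icc m N, I i) + J N)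
      ∧ ((∑ i ∈ Finset.Icc m N, ωtil i)
        = J (m-1) + (∑ i ∈ Finset.Icc m N, ω i) - J N) by
    exact (key n hmn le_rfl _).1
  refine Int.le_induction ?_ ?_
  · intro _ hne
    have hIcc : Finset.Icc m m = {m} := Finset.Icc_self m
    have hJm : J m = ω m + max (J (m-1) - I m) 0 := hJ m le_rfl hmn
    have hωt : ωtil m = min (I m) (J (m-1)) := hωtil m le_rfl hmn
    have hIt : Itil m = ω m + max (I m - J (m-1)) 0 := hItil m le_rfl hmn
    simp only [hIcc, Finset.sup'_singleton, Finset.sum_singleton]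
    refine ⟨?_, ?_, ?_⟩
    · rw [hωt, hIt]; rcases le_total (I m) (J (m-1)) with h | h
      · rw [min_eq_left h, max_eq_right (by linarith)]; ring
      · rw [min_eq_right h, max_eq_left (by linarith)]; ring
    · rw [hJm]; rcases le_total (I m) (J (m-1)) with h | h
      · rw [max_eq_right (le_add_of_sub_left_le (by linarith)), max_eq_left (by linarith)]; ring
      · rw [max_eq_left (le_add_of_sub_left_le (by linarith)), max_eq_right (by linarith)]; ring
    · rw [hωt, hJm]; rcases le_total (I m) (J (m-1)) with h | h
      · rw [min_eq_left h, max_eq_left (by linarith)]; ring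
      · rw [min_eq_right h, max_eq_right (by linarith)]; ring
  · intro N hmN ih hN1n hne1
    have hNn : N ≤ n := by omega
    have hne : (Finset.Icc m N).Nonempty := Finset.nonempty_Icc.mpr hmN
    obtain ⟨ih1, ih2, ih3⟩ := ih hNn hne
    set T := Finset.sup' (Finset.Icc m N) hne
      (fun j => (∑ i ∈ Finset.Icc m j, I i) + ∑ i ∈ Finset.Icc j N, ω i) with hT
    set SI := ∑ i ∈ Finset.Icc m N, I i with hSI
    set Sω := ∑ i ∈ Finset.Icc m N, ω i with hSω
    set Sωt := ∑ i ∈ Finset.Icc m N, ωtil i with hSωt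
    have hJN1 : J (N+1) = ω (N+1) + max (J N - I (N+1)) 0 := by
      have := hJ (N+1) (by omega) hN1n; simpa using this
    have hωtN1 : ωtil (N+1) = min (I (N+1)) (J N) := by
      have := hωtil (N+1) (by omega) hN1n; simpa using this
    have hItN1 : Itil (N+1) = ω (N+1) + max (I (N+1) - J N) 0 := by
      have := hItil (N+1) (by omega) hN1n; simpa using this
    have hins : Finset.Icc m (N+1) = insert (N+1) (Finset.Icc m N) :=
      Icc_insert_top m N (by omega)
    have hnotmem : (N+1) ∉ Finset.Icc m N := by simp
    -- sum splitting for Icc m (N+1)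
    have hsum : ∀ f : ℤ → ℝ, (∑ i ∈ Finset.Icc m (N+1), f i)
        = (∑ i ∈ Finset.Icc m N, f i) + f (N+1) := by
      intro f; rw [hins, Finset.sum_insert hnotmem]; ring
    -- suffix sums: for j ∈ Icc m N, Σ_{Icc j (N+1)} f = Σ_{Icc j N} f + f (N+1)
    have hsuf : ∀ f : ℤ → ℝ, ∀ j, m ≤ j → j ≤ N → (∑ i ∈ Finset.Icc j (N+1), f i)
        = (∑ i ∈ Finset.Icc j N, f i) + f (N+1) := by
      intro f j _ hj
      rw [Icc_insert_top j N (by omega), Finset.sum_insert (by simp)]; ring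
    -- T(N+1) = ω(N+1) + max (SI + I(N+1)) T
    have hTrec : Finset.sup' (Finset.Icc m (N+1)) hne1
        (fun j => (∑ i ∈ Finset.Icc m j, I i) + ∑ i ∈ Finset.Icc j (N+1), ω i)
        = ω (N+1) + max (SI + I (N+1)) T := by
      rw [Finset.sup'_congr hne1 hins (fun _ _ => rfl)]
      rw [Finset.sup'_insert (H := hne)]
      have h1 : ((∑ i ∈ Finset.Icc m (N+1), I i) + ∑ i ∈ Finset.Icc (N+1) (N+1), ω i)
          = SI + I (N+1) + ω (N+1) := by
        rw [hsum I, Finset.Icc_self, Finset.sum_singleton]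
      rw [h1]
      have h2 : Finset.sup' (Finset.Icc m N) hne
          (fun j => (∑ i ∈ Finset.Icc m j, I i) + ∑ i ∈ Finset.Icc j (N+1), ω i)
          = T + ω (N+1) := by
        rw [hT, Finset.sup'_add]
        apply Finset.sup'_congr hne rfl
        intro j hj
        rw [Finset.mem_Icc] at hj
        rw [hsuf ω j hj.1 hj.2]; ring
      rw [h2]
      rcases le_total (SI + I (N+1)) T with h | h
      · rw [max_eq_right h, sup_eq_right.mpr (by linarith)]; ring
      · rw [max_eq_left h, sup_eq_left.mpr (by linarith)]; ring
    -- T̃(N+1) = Itil(N+1) + max (Sωt + ωtil (N+1)) T̃(N)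
    have hTtrec : Finset.sup' (Finset.Icc m (N+1)) hne1
        (fun j => (∑ i ∈ Finset.Icc m j, ωtil i) + ∑ i ∈ Finset.Icc j (N+1), Itil i)
        = Itil (N+1) + max (Sωt + ωtil (N+1)) T := by
      rw [Finset.sup'_congr hne1 hins (fun _ _ => rfl)]
      rw [Finset.sup'_insert (H := hne)]
      have h1 : ((∑ i ∈ Finset.Icc m (N+1), ωtil i) + ∑ i ∈ Finset.Icc (N+1) (N+1), Itil i)
          = Sωt + ωtil (N+1) + Itil (N+1) := by
        rw [hsum ωtil, Finset.Icc_self, Finset.sum_singleton]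
      rw [h1]
      have h2 : Finset.sup' (Finset.Icc m N) hne
          (fun j => (∑ i ∈ Finset.Icc m j, ωtil i) + ∑ i ∈ Finset.Icc j (N+1), Itil i)
          = T + Itil (N+1) := by
        rw [ih1, Finset.sup'_add]
        apply Finset.sup'_congr hne rfl
        intro j hj
        rw [Finset.mem_Icc] at hj
        rw [hsuf Itil j hj.1 hj.2]; ring
      rw [h2]
      rcases le_total (Sωt + ωtil (N+1)) T with h | h
      · rw [max_eq_right h, sup_eq_right.mpr (by linarith)]; ring
      · rw [max_eq_left h, sup_eq_left.mpr (by linarith)]; ring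
    rw [hTrec, hTtrec, hsum I, hsum ω, hsum ωtil]
    rw [← hSI, ← hSω, ← hSωt]
    have hTle : T ≤ SI + J N := by rw [← ih2]; exact le_max_left _ _
    have hBle : J (m-1) + Sω ≤ SI + J N := by rw [← ih2]; exact le_max_right _ _
    have hor : T = SI + J N ∨ J (m-1) + Sω = SI + J N := by
      rcases max_choice T (J (m-1) + Sω) with h | h
      · left; rw [← ih2, h]
      · right; rw [← ih2, h]
    rcases le_total (I (N+1)) (J N) with hc | hc
    · -- I' ≤ J N
      have hJr : J (N+1) = ω (N+1) + (J N - I (N+1)) := by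
        rw [hJN1, max_eq_left (by linarith)]
      have hωr : ωtil (N+1) = I (N+1) := by rw [hωtN1, min_eq_left hc]
      have hIr : Itil (N+1) = ω (N+1) := by
        rw [hItN1, max_eq_right (by linarith)]; ring
      refine ⟨?_, ?_, ?_⟩
      · rw [hωr, hIr, ih3]
        rcases le_total (SI + I (N+1)) T with h | h
        · rw [max_eq_right h, max_eq_right (by linarith)]
        · rcases hor with h6 | h6
          · have hIJ : I (N+1) = J N := by linarith
            have ha : SI + I (N+1) = T := by rw [hIJ, ← h6]
            rw [ha, max_self, max_eq_right (by linarith [hBle])]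
          · have hb : J (m-1) + Sω - J N + I (N+1) = SI + I (N+1) := by linarith
            rw [hb]
      · rw [hJr]
        apply le_antisymm
        · apply max_le
          · have h1 : max (SI + I (N+1)) T ≤ SI + J N :=
              max_le (by linarith) hTle
            linarith
          · linarith [hBle]
        · rcases hor with h6 | h6
          · refine le_trans ?_ (le_max_left _ _)
            have := le_max_right (SI + I (N+1)) T
            linarith
          · refine le_trans ?_ (le_max_right _ _)
            linarith
      · rw [hωr, hJr, ih3]; ring
    · -- I' > J N (or ≥)
      have hJr : J (N+1) = ω (N+1) := by
        rw [hJN1, max_eq_right (by linarith)]; ring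
      have hωr : ωtil (N+1) = J N := by rw [hωtN1, min_eq_right hc]
      have hIr : Itil (N+1) = ω (N+1) + (I (N+1) - J N) := by
        rw [hItN1, max_eq_left (by linarith)]
      have hTmax : max (SI + I (N+1)) T = SI + I (N+1) :=
        max_eq_left (by linarith)
      have hTtmax : max (Sωt + ωtil (N+1)) T = SI + J N := by
        rw [hωr, ih3]
        have : J (m-1) + Sω - J N + J N = J (m-1) + Sω := by ring
        rw [this]
        exact (sup_comm _ _).trans ih2
      refine ⟨?_, ?_, ?_⟩
      · rw [hTmax, hTtmax, hIr]; ring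
      · rw [hTmax, hJr]
        rw [max_eq_left (by linarith [hBle])]
        ring
      · rw [hωr, hJr, ih3]; ring
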